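/- Let 𝒪 be an infinite order ideal in P = K[x_0,…,x_n], let G be a homogeneous ∂𝒪-prebasis, and let d_0 ≥ 2. The following are equivalent: (i) for every 0 ≤ d ≤ d_0, the residue classes of the terms of 𝒪_d form a K-vector space basis of P_d/(G)_d; (ii) for every 0 ≤ d ≤ d_0 − 2 and all r, s ∈ {0,…,n}, the graded formal multiplication matrices of G satisfy Χ_r^{(d+1)}·Χ_s^{(d)} = Χ_s^{(d+1)}·Χ_r^{(d)}. In that case, for every 0 ≤ d ≤ d_0 − 1, the matrix Χ_r^{(d)} represents the multiplication-by-x_r homomorphism P_d/(G)_d → P_{d+1}/(G)_{d+1} with respect to the bases given by the residue classes of 𝒪_d and 𝒪_{d+1}. -/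

import Mathlib

open MvPolynomial

namespace Border

/-- A term of `K[x_0, …, x_n]`, identified with its exponent vector. -/
abbrev Term (n : ℕ) := Fin (n + 1) →₀ ℕ

variable {n : ℕ}

/-- The (standard) degree of a term. -/
def tdeg (m : Term n) : ℕ := ∑ i, m i

/-- An order ideal: a nonempty set of terms closed under divisors. -/
def IsOrderIdeal (O : Set (Term n)) : Prop :=
  O.Nonempty ∧ ∀ τ ∈ O, ∀ τ' : Term n, τ' ≤ τ → τ' ∈ O

/-- The border `∂𝒪 = (x_0·𝒪 ∪ ⋯ ∪ x_n·𝒪) ∖ 𝒪`. -/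
def border (O : Set (Term n)) : Set (Term n) :=
  {σ | σ ∉ O ∧ ∃ r : Fin (n + 1), ∃ τ ∈ O, σ = τ + Finsupp.single r 1}

/-- Multiplicative set of a border term `σ`, with respect to a labeling `lab` of the border:
`𝒯_σ = {η : σ' ∤ η·σ for every border term σ' with a larger label}`. -/
def mulSet (O : Set (Term n)) (lab : Term n → ℕ) (σ : Term n) : Set (Term n) :=
  {η | ∀ σ' ∈ border O, lab σ < lab σ' → ¬ σ' ≤ η + σ}

/-- The cone `C(σ) = {η·σ : η ∈ 𝒯_σ}`. -/
def cone (O : Set (Term n)) (lab : Term n → ℕ) (σ : Term n) : Set (Term n) :=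
  (fun η => η + σ) '' mulSet O lab σ

/-- A labeling of the border which is injective and ordered increasingly by degree. -/
def DegOrderedLabeling (O : Set (Term n)) (lab : Term n → ℕ) : Prop :=
  Set.InjOn lab (border O) ∧
    ∀ σ ∈ border O, ∀ σ' ∈ border O, lab σ < lab σ' → tdeg σ ≤ tdeg σ'

/-- Iterated border closures: `∂⁰𝒪 := 𝒪`, and the `(k+1)`-st closure adds the border. -/
def borderClosure (O : Set (Term n)) : ℕ → Set (Term n)
  | 0 => O
  | k + 1 => borderClosure O k ∪ border (borderClosure O k)

/-- The index `ind_𝒪(τ)`: the least `k` with `τ ∈ ∂^k𝒪`. -/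
noncomputable def ind (O : Set (Term n)) (τ : Term n) : ℕ :=
  sInf {k | τ ∈ borderClosure O k}

/-- Degree-`d` part of a set of terms. -/
def Od (O : Set (Term n)) (d : ℕ) : Set (Term n) := {τ | τ ∈ O ∧ tdeg τ = d}

variable {K : Type*} [Field K]

/-- The index of a nonzero polynomial: the maximal index of a term of its support. -/
noncomputable def indP (O : Set (Term n)) (f : MvPolynomial (Fin (n + 1)) K) : ℕ :=
  f.support.sup (ind O)

/-- A homogeneous `∂𝒪`-prebasis: a family `g σ = σ - Σ_{τ ∈ 𝒪_{deg σ}} c_{στ} τ`. -/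
def IsPrebasis (O : Set (Term n)) (g : Term n → MvPolynomial (Fin (n + 1)) K) : Prop :=
  ∀ σ ∈ border O, ∀ τ ∈ (monomial σ (1 : K) - g σ).support, τ ∈ O ∧ tdeg τ = tdeg σ

/-- The set of border reductors `𝒯G = {η·g_σ : σ ∈ ∂𝒪, η ∈ 𝒯_σ}`. -/
def reductors (O : Set (Term n)) (lab : Term n → ℕ)
    (g : Term n → MvPolynomial (Fin (n + 1)) K) : Set (MvPolynomial (Fin (n + 1)) K) :=
  {p | ∃ σ ∈ border O, ∃ η ∈ mulSet O lab σ, p = monomial η (1 : K) * g σ}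

/-- The degree-`d` border reductors `𝒯G_d = 𝒯G ∩ P_d`. -/
def reductorsDeg (O : Set (Term n)) (lab : Term n → ℕ)
    (g : Term n → MvPolynomial (Fin (n + 1)) K) (d : ℕ) :
    Set (MvPolynomial (Fin (n + 1)) K) :=
  reductors O lab g ∩ {p | p.IsHomogeneous d}

/-- One step of the border reduction relation `→_G`. -/
def Step (O : Set (Term n)) (lab : Term n → ℕ)
    (g : Term n → MvPolynomial (Fin (n + 1)) K)
    (f h : MvPolynomial (Fin (n + 1)) K) : Prop :=
  ∃ σ ∈ border O, ∃ η ∈ mulSet O lab σ, η + σ ∈ f.support ∧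
    h = f - f.coeff (η + σ) • (monomial η (1 : K) * g σ)

/-- The border reduction relation `→⁺_G` (finitely many, possibly zero, steps). -/
def Reduces (O : Set (Term n)) (lab : Term n → ℕ)
    (g : Term n → MvPolynomial (Fin (n + 1)) K) :
    MvPolynomial (Fin (n + 1)) K → MvPolynomial (Fin (n + 1)) K → Prop :=
  Relation.ReflTransGen (Step O lab g)

/-- The `K`-vector space spanned by a set of terms. -/
noncomputable def spanTerms (K : Type*) [Field K] (S : Set (Term n)) :
    Submodule K (MvPolynomial (Fin (n + 1)) K) :=
  Submodule.span K ((fun τ => monomial τ (1 : K)) '' S)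

/-- The ideal `(G)` generated by a `∂𝒪`-prebasis. -/
noncomputable def idealG (O : Set (Term n)) (g : Term n → MvPolynomial (Fin (n + 1)) K) :
    Ideal (MvPolynomial (Fin (n + 1)) K) :=
  Ideal.span (g '' border O)

/-- The degree-`d` part `I_d` of an ideal, as a `K`-vector subspace. -/
noncomputable def degPart (I : Ideal (MvPolynomial (Fin (n + 1)) K)) (d : ℕ) :
    Submodule K (MvPolynomial (Fin (n + 1)) K) :=
  Submodule.restrictScalars K I ⊓ homogeneousSubmodule (Fin (n + 1)) K d

/-- Homogeneous ideal. -/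
def IsHomogeneousIdeal (I : Ideal (MvPolynomial (Fin (n + 1)) K)) : Prop :=
  ∀ f ∈ I, ∀ d : ℕ, homogeneousComponent d f ∈ I

/-- `G` is a homogeneous `∂𝒪`-basis of `J`: it is a prebasis contained in `J` and for every
`d` one has `P_d = J_d ⊕ ⟨𝒪_d⟩`, i.e. the residue classes of `𝒪_d` are a basis of `P_d/J_d`. -/
def IsBorderBasisOf (O : Set (Term n)) (g : Term n → MvPolynomial (Fin (n + 1)) K)
    (J : Ideal (MvPolynomial (Fin (n + 1)) K)) : Prop :=
  IsPrebasis O g ∧ (∀ σ ∈ border O, g σ ∈ J) ∧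
    ∀ d : ℕ, degPart J d ⊔ spanTerms K (Od O d) = homogeneousSubmodule (Fin (n + 1)) K d ∧
      Disjoint (degPart J d) (spanTerms K (Od O d))

/-- An `m`-lower representation of `f` by `𝒯G`: `f = Σ c_j • η_j·g_{σ_j}` with distinct
pairs `(η_j, σ_j)`, `η_j ∈ 𝒯_{σ_j}` and `ind(η_j σ_j) ≤ m`. -/
def HasLRep (O : Set (Term n)) (lab : Term n → ℕ)
    (g : Term n → MvPolynomial (Fin (n + 1)) K)
    (f : MvPolynomial (Fin (n + 1)) K) (m : ℕ) : Prop :=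
  ∃ (s : Finset (Term n × Term n)) (c : Term n × Term n → K),
    (∀ p ∈ s, p.2 ∈ border O ∧ p.1 ∈ mulSet O lab p.2 ∧ ind O (p.1 + p.2) ≤ m) ∧
    f = ∑ p ∈ s, c p • (monomial p.1 (1 : K) * g p.2)

/-- An `m`-lower representation of `f` by `𝒯G_d`. -/
def HasLRepDeg (O : Set (Term n)) (lab : Term n → ℕ)
    (g : Term n → MvPolynomial (Fin (n + 1)) K)
    (f : MvPolynomial (Fin (n + 1)) K) (m d : ℕ) : Prop :=
  ∃ (s : Finset (Term n × Term n)) (c : Term n × Term n → K),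
    (∀ p ∈ s, p.2 ∈ border O ∧ p.1 ∈ mulSet O lab p.2 ∧ ind O (p.1 + p.2) ≤ m ∧
      (monomial p.1 (1 : K) * g p.2).IsHomogeneous d) ∧
    f = ∑ p ∈ s, c p • (monomial p.1 (1 : K) * g p.2)

/-- The subtype of terms of `𝒪` of degree `d`. -/
abbrev OdSub (O : Set (Term n)) (d : ℕ) : Type _ := {τ : Term n // τ ∈ Od O d}

lemma tdeg_component_lt {d : ℕ} (m : Term n) (h : tdeg m = d) (i : Fin (n + 1)) :
    m i < d + 1 := by
  have : m i ≤ tdeg m :=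
    Finset.single_le_sum (f := fun j => m j) (fun j _ => Nat.zero_le _) (Finset.mem_univ i)
  omega

instance (O : Set (Term n)) (d : ℕ) : Finite (OdSub O d) := by
  have hinj : Function.Injective
      (fun τ : OdSub O d => fun i : Fin (n + 1) =>
        (⟨τ.1 i, tdeg_component_lt τ.1 τ.2.2 i⟩ : Fin (d + 1))) := by
    intro a b hab
    apply Subtype.ext
    apply Finsupp.ext
    intro i
    simpa using congrArg Fin.val (congrFun hab i)
  exact Finite.of_injective _ hinj

noncomputable instance (O : Set (Term n)) (d : ℕ) : Fintype (OdSub O d) :=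
  Fintype.ofFinite _

open scoped Classical in
/-- The `r`-th `d`-graded formal multiplication matrix of a prebasis `G`,
with rows indexed by `𝒪_{d+1}` and columns by `𝒪_d`. -/
noncomputable def multMatrix (O : Set (Term n))
    (g : Term n → MvPolynomial (Fin (n + 1)) K) (r : Fin (n + 1)) (d : ℕ) :
    Matrix (OdSub O (d + 1)) (OdSub O d) K :=
  Matrix.of fun τ' τ =>
    if τ.1 + Finsupp.single r 1 ∈ O then
      (if τ.1 + Finsupp.single r 1 = τ'.1 then 1 else 0)
    else (monomial (τ.1 + Finsupp.single r 1) (1 : K)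
            - g (τ.1 + Finsupp.single r 1)).coeff τ'.1

/-- The minimum degree of a border term. -/
noncomputable def minDegBorder (O : Set (Term n)) : ℕ := sInf (tdeg '' border O)

/-- The `d`-th Macaulay transformation `a^{⟨d⟩}`, computed greedily. -/
noncomputable def macaulay : ℕ → ℕ → ℕ
  | 0, _ => 0
  | d + 1, a =>
    if a = 0 then 0
    else
      Nat.choose (sSup {k | Nat.choose k (d + 1) ≤ a} + 1) (d + 2) +
        macaulay d (a - Nat.choose (sSup {k | Nat.choose k (d + 1) ≤ a}) (d + 1))

/-- An ideal is generated in degrees `≤ m` if it is generated by its homogeneous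
elements of degree `≤ m`. -/
def GeneratedInDegLE (I : Ideal (MvPolynomial (Fin (n + 1)) K)) (m : ℕ) : Prop :=
  I = Ideal.span {f | f ∈ I ∧ ∃ d ≤ m, f.IsHomogeneous d}

section Aux

variable {K : Type*} [Field K]

lemma tdeg_zero : tdeg (0 : Term n) = 0 := by simp [tdeg]

lemma tdeg_eq_zero {m : Term n} (h : tdeg m = 0) : m = 0 := by
  have h' := Finset.sum_eq_zero_iff.mp h
  ext i; exact h' i (Finset.mem_univ i)

lemma tdeg_add (a b : Term n) : tdeg (a + b) = tdeg a + tdeg b := by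
  simp [tdeg, Finset.sum_add_distrib]

lemma tdeg_single (r : Fin (n + 1)) : tdeg (Finsupp.single r (1 : ℕ)) = 1 := by
  simp [tdeg, Finsupp.single_apply]

lemma degree_eq_tdeg (m : Term n) : m.degree = tdeg m := by
  rw [tdeg, Finsupp.degree]
  exact Finset.sum_subset (Finset.subset_univ _)
    (fun i _ hi => Finsupp.notMem_support_iff.mp hi)

lemma monomial_homog (m : Term n) (c : K) :
    (monomial m c).IsHomogeneous (tdeg m) :=
  isHomogeneous_monomial _ (degree_eq_tdeg m)

lemma tdeg_of_mem_support {f : MvPolynomial (Fin (n + 1)) K} {d : ℕ}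
    (hf : f.IsHomogeneous d) {m : Term n} (hm : m ∈ f.support) : tdeg m = d := by
  by_contra h
  rw [← degree_eq_tdeg] at h
  exact (mem_support_iff.mp hm) (hf.coeff_eq_zero h)

lemma X_mul_monomial' (r : Fin (n + 1)) (m : Term n) (c : K) :
    (X r : MvPolynomial (Fin (n + 1)) K) * monomial m c
      = monomial (m + Finsupp.single r 1) c := by
  rw [show m + Finsupp.single r 1 = Finsupp.single r 1 + m from add_comm _ _,
    monomial_single_add, pow_one]

lemma zero_mem_of_orderIdeal {O : Set (Term n)} (hO : IsOrderIdeal O) :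
    (0 : Term n) ∈ O := by
  obtain ⟨τ, hτ⟩ := hO.1
  exact hO.2 τ hτ 0 zero_le

lemma homog_of_support {p : MvPolynomial (Fin (n + 1)) K} {d : ℕ}
    (h : ∀ m ∈ p.support, tdeg m = d) :
    p ∈ homogeneousSubmodule (Fin (n + 1)) K d := by
  rw [p.as_sum]
  apply Submodule.sum_mem
  intro m hm
  rw [mem_homogeneousSubmodule, ← h m hm]
  exact monomial_homog m _

lemma g_homog {O : Set (Term n)} {g : Term n → MvPolynomial (Fin (n + 1)) K}
    (hg : IsPrebasis O g) {σ : Term n} (hσ : σ ∈ border O) :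
    (g σ).IsHomogeneous (tdeg σ) := by
  have h1 : (monomial σ (1 : K) - g σ).IsHomogeneous (tdeg σ) := by
    rw [← mem_homogeneousSubmodule]
    exact homog_of_support (fun m hm => (hg σ hσ m hm).2)
  have h2 : (monomial σ (1 : K)).IsHomogeneous (tdeg σ) := monomial_homog σ 1
  have h3 := h2.sub h1
  simpa using h3

/-! ### coefficient extraction from `O_E`-indexed sums -/

lemma coeff_odSum {O : Set (Term n)} {E : ℕ} (c : OdSub O E → K) (τ₀ : OdSub O E) :
    coeff τ₀.1 (∑ τ'' : OdSub O E, c τ'' • monomial τ''.1 (1 : K)) = c τ₀ := by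
  classical
  rw [coeff_sum]
  rw [Finset.sum_eq_single τ₀]
  · simp [coeff_monomial]
  · intro b _ hb
    have hne : b.1 ≠ τ₀.1 := fun h => hb (Subtype.ext h)
    simp [coeff_smul, coeff_monomial, hne]
  · intro h; exact absurd (Finset.mem_univ τ₀) h

lemma coeff_odSum_notmem {O : Set (Term n)} {E : ℕ} (c : OdSub O E → K)
    {m : Term n} (hm : m ∉ Od O E) :
    coeff m (∑ τ'' : OdSub O E, c τ'' • monomial τ''.1 (1 : K)) = 0 := by
  classical
  rw [coeff_sum]
  refine Finset.sum_eq_zero fun τ'' _ => ?_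
  have hne : τ''.1 ≠ m := fun h => hm (h ▸ τ''.2)
  simp [coeff_smul, coeff_monomial, hne]

/-! ### the column sums of the formal multiplication matrices -/

lemma colSum_mem (O : Set (Term n)) (g : Term n → MvPolynomial (Fin (n + 1)) K)
    {τ : Term n} {d : ℕ} (hτ : τ ∈ O) (hd : tdeg τ = d) {r : Fin (n + 1)}
    (h : τ + Finsupp.single r 1 ∈ O) :
    ∑ τ' : OdSub O (d + 1), multMatrix O g r d τ' ⟨τ, hτ, hd⟩ • monomial τ'.1 (1 : K)
      = monomial (τ + Finsupp.single r 1) (1 : K) := by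
  classical
  have hmem : τ + Finsupp.single r 1 ∈ Od O (d + 1) :=
    ⟨h, by rw [tdeg_add, hd, tdeg_single]⟩
  ext m
  by_cases hm : m ∈ Od O (d + 1)
  · rw [coeff_odSum (fun τ' => multMatrix O g r d τ' ⟨τ, hτ, hd⟩) ⟨m, hm⟩]
    rw [multMatrix]
    simp only [Matrix.of_apply, if_pos h]
    rw [coeff_monomial]
  · rw [coeff_odSum_notmem _ hm, coeff_monomial, if_neg]
    intro he; exact hm (he ▸ hmem)

lemma colSum_border (O : Set (Term n)) {g : Term n → MvPolynomial (Fin (n + 1)) K}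
    (hg : IsPrebasis O g) {τ : Term n} {d : ℕ} (hτ : τ ∈ O) (hd : tdeg τ = d)
    {r : Fin (n + 1)} (h : τ + Finsupp.single r 1 ∉ O) :
    ∑ τ' : OdSub O (d + 1), multMatrix O g r d τ' ⟨τ, hτ, hd⟩ • monomial τ'.1 (1 : K)
      = monomial (τ + Finsupp.single r 1) (1 : K) - g (τ + Finsupp.single r 1) := by
  classical
  set σ := τ + Finsupp.single r 1 with hσ
  have hσb : σ ∈ border O := ⟨h, r, τ, hτ, rfl⟩
  have hσd : tdeg σ = d + 1 := by rw [hσ, tdeg_add, hd, tdeg_single]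
  have hsupp : ∀ m ∈ (monomial σ (1 : K) - g σ).support, m ∈ Od O (d + 1) := by
    intro m hm
    obtain ⟨h1, h2⟩ := hg σ hσb m hm
    exact ⟨h1, by rw [h2, hσd]⟩
  ext m
  by_cases hm : m ∈ Od O (d + 1)
  · rw [coeff_odSum (fun τ' => multMatrix O g r d τ' ⟨τ, hτ, hd⟩) ⟨m, hm⟩]
    rw [multMatrix]
    simp only [Matrix.of_apply, if_neg h]
    exact if_neg h
  · rw [coeff_odSum_notmem _ hm]
    symm
    by_contra hne
    exact hm (hsupp m (mem_support_iff.mpr hne))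

/-- The error polynomial whose membership in `(G)` expresses that the matrix column
gives the normal form of `x_r·τ`. -/
noncomputable def errP (O : Set (Term n)) (g : Term n → MvPolynomial (Fin (n + 1)) K)
    (r : Fin (n + 1)) (d : ℕ) (τ : OdSub O d) : MvPolynomial (Fin (n + 1)) K :=
  monomial (τ.1 + Finsupp.single r 1) (1 : K) -
    ∑ τ' : OdSub O (d + 1), multMatrix O g r d τ' τ • monomial τ'.1 (1 : K)

lemma errP_mem (O : Set (Term n)) {g : Term n → MvPolynomial (Fin (n + 1)) K}
    (hg : IsPrebasis O g) (r : Fin (n + 1)) (d : ℕ) (τ : OdSub O d) :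
    errP O g r d τ ∈ idealG O g := by
  classical
  obtain ⟨τv, hτ, hd⟩ := τ
  by_cases h : τv + Finsupp.single r 1 ∈ O
  · rw [errP]
    simp only
    rw [colSum_mem O g hτ hd h, sub_self]
    exact zero_mem _
  · rw [errP]
    simp only
    rw [colSum_border O hg hτ hd h, sub_sub_cancel]
    exact Ideal.subset_span
      (Set.mem_image_of_mem g (show τv + Finsupp.single r 1 ∈ border O from ⟨h, r, τv, hτ, rfl⟩))

lemma errP_homog (O : Set (Term n)) (g : Term n → MvPolynomial (Fin (n + 1)) K)
    (r : Fin (n + 1)) (d : ℕ) (τ : OdSub O d) :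
    errP O g r d τ ∈ homogeneousSubmodule (Fin (n + 1)) K (d + 1) := by
  apply Submodule.sub_mem
  · rw [mem_homogeneousSubmodule]
    exact isHomogeneous_monomial _
      (by rw [degree_eq_tdeg, tdeg_add, τ.2.2, tdeg_single])
  · apply Submodule.sum_mem
    intro τ' _
    apply Submodule.smul_mem
    rw [mem_homogeneousSubmodule]
    exact isHomogeneous_monomial _ (by rw [degree_eq_tdeg, τ'.2.2])

/-! ### span facts -/

lemma monomial_mem_spanTerms {S : Set (Term n)} {m : Term n} (hm : m ∈ S) (c : K) :
    monomial m c ∈ spanTerms K S := by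
  have h : monomial m c = c • monomial m (1 : K) := by
    rw [smul_monomial, smul_eq_mul, mul_one]
  rw [h]
  exact Submodule.smul_mem _ _ (Submodule.subset_span ⟨m, hm, rfl⟩)

lemma mem_spanTerms_of_support {f : MvPolynomial (Fin (n + 1)) K} {S : Set (Term n)}
    (h : ∀ m ∈ f.support, m ∈ S) : f ∈ spanTerms K S := by
  rw [f.as_sum]
  exact Submodule.sum_mem _ fun m hm => monomial_mem_spanTerms (h m hm) _

lemma support_subset_of_mem_spanTerms {S : Set (Term n)} {f : MvPolynomial (Fin (n + 1)) K}
    (hf : f ∈ spanTerms K S) : ∀ m ∈ f.support, m ∈ S := by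
  classical
  induction hf using Submodule.span_induction with
  | mem x hx =>
    obtain ⟨τ, hτ, rfl⟩ := hx
    intro m hm
    rw [support_monomial, if_neg one_ne_zero] at hm
    rwa [Finset.mem_singleton.mp hm]
  | zero => simp
  | add x y hx hy ihx ihy =>
    intro m hm
    rcases Finset.mem_union.mp (MvPolynomial.support_add hm) with h | h
    · exact ihx m h
    · exact ihy m h
  | smul a x hx ih =>
    intro m hm
    exact ih m (MvPolynomial.support_smul hm)

/-! ### spanning (unconditional) -/

lemma xmul_span (O : Set (Term n)) {g : Term n → MvPolynomial (Fin (n + 1)) K}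
    (hg : IsPrebasis O g) (d : ℕ) (r : Fin (n + 1)) :
    ∀ q ∈ spanTerms K (Od O d),
      (X r : MvPolynomial (Fin (n + 1)) K) * q ∈
        degPart (idealG O g) (d + 1) ⊔ spanTerms K (Od O (d + 1)) := by
  intro q hq
  induction hq using Submodule.span_induction with
  | mem x hx =>
    obtain ⟨τ, hτ, rfl⟩ := hx
    rw [X_mul_monomial']
    have hσd : tdeg (τ + Finsupp.single r 1) = d + 1 := by
      rw [tdeg_add, hτ.2, tdeg_single]
    by_cases h : τ + Finsupp.single r 1 ∈ O
    · exact Submodule.mem_sup_right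
        (monomial_mem_spanTerms (S := Od O (d + 1)) ⟨h, hσd⟩ 1)
    · have hσb : τ + Finsupp.single r 1 ∈ border O := ⟨h, r, τ, hτ.1, rfl⟩
      have hsplit : monomial (τ + Finsupp.single r 1) (1 : K)
          = g (τ + Finsupp.single r 1)
            + (monomial (τ + Finsupp.single r 1) (1 : K) - g (τ + Finsupp.single r 1)) := by
        ring
      rw [hsplit]
      apply Submodule.add_mem
      · apply Submodule.mem_sup_left
        rw [degPart, Submodule.mem_inf, Submodule.restrictScalars_mem]
        refine ⟨Ideal.subset_span (Set.mem_image_of_mem g hσb), ?_⟩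
        rw [mem_homogeneousSubmodule, ← hσd]
        exact g_homog hg hσb
      · apply Submodule.mem_sup_right
        apply mem_spanTerms_of_support
        intro m hm
        obtain ⟨h1, h2⟩ := hg _ hσb m hm
        exact ⟨h1, by rw [h2, hσd]⟩
  | zero => simpa using zero_mem _
  | add x y hx hy ihx ihy =>
    rw [mul_add]; exact Submodule.add_mem _ ihx ihy
  | smul a x hx ih =>
    rw [mul_smul_comm]; exact Submodule.smul_mem _ _ ih

lemma monomial_mem_sup (O : Set (Term n)) {g : Term n → MvPolynomial (Fin (n + 1)) K}
    (hO : IsOrderIdeal O) (hg : IsPrebasis O g) :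
    ∀ (d : ℕ) (m : Term n) (c : K), tdeg m = d →
      monomial m c ∈ degPart (idealG O g) d ⊔ spanTerms K (Od O d) := by
  intro d
  induction d with
  | zero =>
    intro m c hm
    have h0 : m = 0 := tdeg_eq_zero hm
    subst h0
    exact Submodule.mem_sup_right
      (monomial_mem_spanTerms (S := Od O 0) ⟨zero_mem_of_orderIdeal hO, tdeg_zero⟩ c)
  | succ d ih =>
    intro m c hm
    have hm0 : m ≠ 0 := by
      intro h; subst h; rw [tdeg_zero] at hm; omega
    obtain ⟨r, hr⟩ : ∃ r, m r ≠ 0 := by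
      by_contra h; push_neg at h
      exact hm0 (Finsupp.ext fun i => h i)
    have hle : Finsupp.single r 1 ≤ m :=
      Finsupp.single_le_iff.mpr (Nat.one_le_iff_ne_zero.mpr hr)
    have heq : (m - Finsupp.single r 1) + Finsupp.single r 1 = m :=
      tsub_add_cancel_of_le hle
    have hdeg : tdeg (m - Finsupp.single r 1) = d := by
      have h := tdeg_add (m - Finsupp.single r 1) (Finsupp.single r 1)
      rw [heq, tdeg_single, hm] at h
      omega
    have hmono : monomial m c
        = (X r : MvPolynomial (Fin (n + 1)) K) * monomial (m - Finsupp.single r 1) c := by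
      rw [X_mul_monomial', heq]
    rw [hmono]
    obtain ⟨p, hp, q, hq, hpq⟩ := Submodule.mem_sup.mp (ih (m - Finsupp.single r 1) c hdeg)
    rw [← hpq, mul_add]
    apply Submodule.add_mem
    · apply Submodule.mem_sup_left
      rw [degPart, Submodule.mem_inf, Submodule.restrictScalars_mem] at hp ⊢
      constructor
      · exact Ideal.mul_mem_left _ _ hp.1
      · rw [mem_homogeneousSubmodule]
        have := (isHomogeneous_X K r).mul ((mem_homogeneousSubmodule _ _).mp hp.2)
        rwa [Nat.add_comm 1 d] at this
    · exact xmul_span O hg d r q hq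

lemma spanning (O : Set (Term n)) {g : Term n → MvPolynomial (Fin (n + 1)) K}
    (hO : IsOrderIdeal O) (hg : IsPrebasis O g) (d : ℕ) :
    degPart (idealG O g) d ⊔ spanTerms K (Od O d)
      = homogeneousSubmodule (Fin (n + 1)) K d := by
  apply le_antisymm
  · apply sup_le
    · exact inf_le_right
    · rw [spanTerms, Submodule.span_le]
      rintro x ⟨τ, hτ, rfl⟩
      rw [SetLike.mem_coe, mem_homogeneousSubmodule, ← hτ.2]
      exact monomial_homog τ 1
  · intro f hf
    rw [f.as_sum]
    apply Submodule.sum_mem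
    intro m hm
    exact monomial_mem_sup O hO hg d m _
      (tdeg_of_mem_support ((mem_homogeneousSubmodule _ _).mp hf) hm)

/-! ### the normal form map `Φ` built from the matrices -/

noncomputable def minIdx (m : Term n) (h : m ≠ 0) : Fin (n + 1) :=
  m.support.min' (Finsupp.support_nonempty_iff.mpr h)

lemma minIdx_apply_ne (m : Term n) (h : m ≠ 0) : m (minIdx m h) ≠ 0 :=
  Finsupp.mem_support_iff.mp (m.support.min'_mem _)

open scoped Classical in
noncomputable def phi (O : Set (Term n)) (g : Term n → MvPolynomial (Fin (n + 1)) K) :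
    (D : ℕ) → Term n → (OdSub O D → K)
  | 0 => fun m τ => if τ.1 = m then 1 else 0
  | (D + 1) => fun m =>
      if h : m = 0 then 0
      else (multMatrix O g (minIdx m h) D).mulVec
             (phi O g D (m - Finsupp.single (minIdx m h) 1))

lemma phi_succ_eq (O : Set (Term n)) (g : Term n → MvPolynomial (Fin (n + 1)) K)
    {D : ℕ} {m : Term n} (h : m ≠ 0) :
    phi O g (D + 1) m
      = (multMatrix O g (minIdx m h) D).mulVec
          (phi O g D (m - Finsupp.single (minIdx m h) 1)) := by
  rw [phi]
  simp only [dif_neg h]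

lemma mulVec_ind {O : Set (Term n)} {E : ℕ}
    (M : Matrix (OdSub O (E + 1)) (OdSub O E) K) (τ' : Term n) (h : τ' ∈ Od O E) :
    M.mulVec (fun τc : OdSub O E => if τc.1 = τ' then 1 else 0)
      = fun τ'' => M τ'' ⟨τ', h⟩ := by
  classical
  funext τ''
  simp only [Matrix.mulVec, dotProduct]
  rw [Finset.sum_eq_single (⟨τ', h⟩ : OdSub O E)]
  · simp
  · intro b _ hb
    have hne : b.1 ≠ τ' := fun hh => hb (Subtype.ext hh)
    simp [hne]
  · intro h'; exact absurd (Finset.mem_univ _) h'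

lemma phi_of_mem (O : Set (Term n)) (g : Term n → MvPolynomial (Fin (n + 1)) K)
    (hO : IsOrderIdeal O) :
    ∀ (D : ℕ) (τ : Term n), τ ∈ O → tdeg τ = D →
      phi O g D τ = fun τ'' : OdSub O D => if τ''.1 = τ then 1 else 0 := by
  intro D
  induction D with
  | zero =>
    intro τ _ hd
    have h0 : τ = 0 := tdeg_eq_zero hd
    subst h0
    rfl
  | succ D ih =>
    intro τ hτ hd
    have hτ0 : τ ≠ 0 := by
      intro h; subst h; rw [tdeg_zero] at hd; omega
    rw [phi_succ_eq O g hτ0]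
    set r := minIdx τ hτ0 with hr
    have hr' : τ r ≠ 0 := minIdx_apply_ne τ hτ0
    have hle : Finsupp.single r 1 ≤ τ :=
      Finsupp.single_le_iff.mpr (Nat.one_le_iff_ne_zero.mpr hr')
    have heq : (τ - Finsupp.single r 1) + Finsupp.single r 1 = τ :=
      tsub_add_cancel_of_le hle
    have hmem : τ - Finsupp.single r 1 ∈ O := hO.2 τ hτ _ tsub_le_self
    have hdeg : tdeg (τ - Finsupp.single r 1) = D := by
      have h := tdeg_add (τ - Finsupp.single r 1) (Finsupp.single r 1)
      rw [heq, tdeg_single, hd] at h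
      omega
    rw [ih _ hmem hdeg, mulVec_ind _ _ ⟨hmem, hdeg⟩]
    funext τ''
    rw [multMatrix]
    simp only [Matrix.of_apply]
    rw [heq, if_pos hτ]
    by_cases h : τ = τ''.1
    · rw [if_pos h, if_pos h.symm]
    · rw [if_neg h, if_neg (fun hh => h hh.symm)]

lemma phi_add_single (O : Set (Term n)) (g : Term n → MvPolynomial (Fin (n + 1)) K)
    {d₀ : ℕ} (hd₀ : 2 ≤ d₀)
    (HC : ∀ d ≤ d₀ - 2, ∀ r s : Fin (n + 1),
      multMatrix O g r (d + 1) * multMatrix O g s d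
        = multMatrix O g s (d + 1) * multMatrix O g r d) :
    ∀ (D : ℕ), D + 1 ≤ d₀ → ∀ (m' : Term n) (r : Fin (n + 1)), tdeg m' = D →
      phi O g (D + 1) (m' + Finsupp.single r 1)
        = (multMatrix O g r D).mulVec (phi O g D m') := by
  intro D
  induction D using Nat.strong_induction_on with
  | _ D ih =>
    intro hD m' r hm'
    have hmr : (m' + Finsupp.single r 1 : Term n) r ≠ 0 := by
      simp [Finsupp.add_apply, Finsupp.single_apply]
    have hm0 : m' + Finsupp.single r 1 ≠ 0 := by
      intro h; rw [h] at hmr; simp at hmr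
    rw [phi_succ_eq O g hm0]
    set r0 := minIdx (m' + Finsupp.single r 1) hm0 with hr0
    by_cases hrr : r0 = r
    · have hsub : (m' + Finsupp.single r 1) - Finsupp.single r0 1 = m' := by
        rw [hrr, add_tsub_cancel_right]
      rw [hsub, hrr]
    · have hmr0 : (m' + Finsupp.single r 1 : Term n) r0 ≠ 0 :=
        minIdx_apply_ne (m' + Finsupp.single r 1) hm0
      have hm'r0 : m' r0 ≠ 0 := by
        have heq : (m' + Finsupp.single r 1 : Term n) r0 = m' r0 := by
          rw [Finsupp.add_apply, Finsupp.single_apply, if_neg (fun h => hrr h.symm), add_zero]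
        rwa [heq] at hmr0
      have hDpos : 1 ≤ D := by
        have hle : m' r0 ≤ tdeg m' :=
          Finset.single_le_sum (f := fun i => m' i) (fun i _ => Nat.zero_le _)
            (Finset.mem_univ r0)
        omega
      obtain ⟨D', rfl⟩ : ∃ D', D = D' + 1 := ⟨D - 1, by omega⟩
      have hle0 : Finsupp.single r0 1 ≤ m' :=
        Finsupp.single_le_iff.mpr (Nat.one_le_iff_ne_zero.mpr hm'r0)
      have heq' : (m' - Finsupp.single r0 1) + Finsupp.single r0 1 = m' :=
        tsub_add_cancel_of_le hle0
      have hdeg'' : tdeg (m' - Finsupp.single r0 1) = D' := by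
        have h := tdeg_add (m' - Finsupp.single r0 1) (Finsupp.single r0 1)
        rw [heq', tdeg_single, hm'] at h
        omega
      have hsub : (m' + Finsupp.single r 1) - Finsupp.single r0 1
          = (m' - Finsupp.single r0 1) + Finsupp.single r 1 := by
        rw [tsub_add_eq_add_tsub hle0]
      rw [hsub]
      rw [ih D' (by omega) (by omega) (m' - Finsupp.single r0 1) r hdeg'']
      rw [Matrix.mulVec_mulVec]
      rw [HC D' (by omega) r0 r]
      rw [← Matrix.mulVec_mulVec]
      rw [← ih D' (by omega) (by omega) (m' - Finsupp.single r0 1) r0 hdeg'']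
      rw [heq']

noncomputable def Phi (O : Set (Term n)) (g : Term n → MvPolynomial (Fin (n + 1)) K)
    (D : ℕ) : MvPolynomial (Fin (n + 1)) K →ₗ[K] (OdSub O D → K) :=
  (basisMonomials (Fin (n + 1)) K).constr K (phi O g D)

lemma Phi_monomial (O : Set (Term n)) (g : Term n → MvPolynomial (Fin (n + 1)) K)
    (D : ℕ) (m : Term n) :
    Phi O g D (monomial m (1 : K)) = phi O g D m := by
  have h : (monomial m (1 : K)) = basisMonomials (Fin (n + 1)) K m := by
    rw [coe_basisMonomials]
  rw [Phi, h, Module.Basis.constr_basis]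

lemma Phi_monomial' (O : Set (Term n)) (g : Term n → MvPolynomial (Fin (n + 1)) K)
    (D : ℕ) (m : Term n) (c : K) :
    Phi O g D (monomial m c) = c • phi O g D m := by
  have h : monomial m c = c • monomial m (1 : K) := by
    rw [smul_monomial, smul_eq_mul, mul_one]
  rw [h, map_smul, Phi_monomial]

lemma Phi_of_supp (O : Set (Term n)) (g : Term n → MvPolynomial (Fin (n + 1)) K)
    (hO : IsOrderIdeal O) {D : ℕ} {f : MvPolynomial (Fin (n + 1)) K}
    (hsupp : ∀ m ∈ f.support, m ∈ Od O D) :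
    Phi O g D f = fun τ'' => coeff τ''.1 f := by
  classical
  conv_lhs => rw [f.as_sum]
  rw [map_sum]
  funext τ''
  rw [Finset.sum_apply]
  have hterm : ∀ m ∈ f.support,
      (Phi O g D (monomial m (coeff m f))) τ''
        = coeff m f * (if τ''.1 = m then 1 else 0) := by
    intro m hm
    rw [Phi_monomial', phi_of_mem O g hO D m (hsupp m hm).1 (hsupp m hm).2]
    simp
  by_cases h : τ''.1 ∈ f.support
  · rw [Finset.sum_congr rfl hterm]
    rw [Finset.sum_eq_single τ''.1]
    · simp
    · intro b _ hb
      rw [if_neg (fun hh => hb hh.symm), mul_zero]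
    · intro hh; exact absurd h hh
  · rw [Finset.sum_congr rfl hterm]
    rw [MvPolynomial.notMem_support_iff.mp h]
    refine Finset.sum_eq_zero fun m hm => ?_
    rw [if_neg, mul_zero]
    intro hh
    exact h (hh ▸ hm)

lemma Phi_g (O : Set (Term n)) {g : Term n → MvPolynomial (Fin (n + 1)) K}
    (hO : IsOrderIdeal O) (hg : IsPrebasis O g) {d₀ : ℕ} (hd₀ : 2 ≤ d₀)
    (HC : ∀ d ≤ d₀ - 2, ∀ r s : Fin (n + 1),
      multMatrix O g r (d + 1) * multMatrix O g s d
        = multMatrix O g s (d + 1) * multMatrix O g r d)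
    {σ : Term n} {D : ℕ} (hσ : σ ∈ border O) (hσd : tdeg σ = D + 1)
    (hD : D + 1 ≤ d₀) : Phi O g (D + 1) (g σ) = 0 := by
  classical
  obtain ⟨hσO, r, τ, hτ, rfl⟩ := hσ
  have hσb : τ + Finsupp.single r 1 ∈ border O := ⟨hσO, r, τ, hτ, rfl⟩
  have hτd : tdeg τ = D := by
    rw [tdeg_add, tdeg_single] at hσd; omega
  have key : Phi O g (D + 1) (g (τ + Finsupp.single r 1))
      = Phi O g (D + 1) (monomial (τ + Finsupp.single r 1) (1 : K))
        - Phi O g (D + 1)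
            (monomial (τ + Finsupp.single r 1) (1 : K) - g (τ + Finsupp.single r 1)) := by
    rw [← map_sub, sub_sub_cancel]
  rw [key]
  rw [Phi_monomial, phi_add_single O g hd₀ HC D hD τ r hτd,
    phi_of_mem O g hO D τ hτ hτd, mulVec_ind _ _ ⟨hτ, hτd⟩]
  rw [Phi_of_supp O g hO (fun m hm => ⟨(hg _ hσb m hm).1, by rw [(hg _ hσb m hm).2, hσd]⟩)]
  funext τ''
  rw [multMatrix]
  simp only [Matrix.of_apply, if_neg hσO, Pi.sub_apply, Pi.zero_apply, sub_self]

lemma Phi_X_mul (O : Set (Term n)) (g : Term n → MvPolynomial (Fin (n + 1)) K)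
    {d₀ : ℕ} (hd₀ : 2 ≤ d₀)
    (HC : ∀ d ≤ d₀ - 2, ∀ r s : Fin (n + 1),
      multMatrix O g r (d + 1) * multMatrix O g s d
        = multMatrix O g s (d + 1) * multMatrix O g r d)
    {e : ℕ} (he : e + 1 ≤ d₀) {f : MvPolynomial (Fin (n + 1)) K}
    (hf : f ∈ homogeneousSubmodule (Fin (n + 1)) K e) (r : Fin (n + 1)) :
    Phi O g (e + 1) ((X r : MvPolynomial (Fin (n + 1)) K) * f)
      = (multMatrix O g r e).mulVec (Phi O g e f) := by
  rw [← Matrix.mulVecLin_apply]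
  conv_lhs => rw [f.as_sum]
  conv_rhs => rw [f.as_sum]
  rw [Finset.mul_sum, map_sum, map_sum, map_sum]
  refine Finset.sum_congr rfl fun m hm => ?_
  have hdm : tdeg m = e :=
    tdeg_of_mem_support ((mem_homogeneousSubmodule _ _).mp hf) hm
  rw [X_mul_monomial', Phi_monomial', Phi_monomial',
    phi_add_single O g hd₀ HC e he m r hdm, map_smul, Matrix.mulVecLin_apply]

lemma Phi_monomial_mul_zero (O : Set (Term n)) (g : Term n → MvPolynomial (Fin (n + 1)) K)
    {d₀ : ℕ} (hd₀ : 2 ≤ d₀)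
    (HC : ∀ d ≤ d₀ - 2, ∀ r s : Fin (n + 1),
      multMatrix O g r (d + 1) * multMatrix O g s d
        = multMatrix O g s (d + 1) * multMatrix O g r d) :
    ∀ (k : ℕ) (m : Term n), tdeg m = k → ∀ (e : ℕ) (f : MvPolynomial (Fin (n + 1)) K),
      f ∈ homogeneousSubmodule (Fin (n + 1)) K e → e + k ≤ d₀ → Phi O g e f = 0 →
      Phi O g (e + k) (monomial m (1 : K) * f) = 0 := by
  intro k
  induction k with
  | zero =>
    intro m hm e f hf _ h0
    have h1 : m = 0 := tdeg_eq_zero hm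
    subst h1
    rw [show monomial (0 : Term n) (1 : K) = 1 from rfl, one_mul]
    exact h0
  | succ k ih =>
    intro m hm e f hf hle h0
    have hm0 : m ≠ 0 := by
      intro h; subst h; rw [tdeg_zero] at hm; omega
    obtain ⟨r, hr⟩ : ∃ r, m r ≠ 0 := by
      by_contra h; push_neg at h
      exact hm0 (Finsupp.ext fun i => h i)
    have hle' : Finsupp.single r 1 ≤ m :=
      Finsupp.single_le_iff.mpr (Nat.one_le_iff_ne_zero.mpr hr)
    have heq : (m - Finsupp.single r 1) + Finsupp.single r 1 = m :=
      tsub_add_cancel_of_le hle'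
    have hdeg : tdeg (m - Finsupp.single r 1) = k := by
      have h := tdeg_add (m - Finsupp.single r 1) (Finsupp.single r 1)
      rw [heq, tdeg_single, hm] at h
      omega
    have hmono : monomial m (1 : K)
        = (X r : MvPolynomial (Fin (n + 1)) K) * monomial (m - Finsupp.single r 1) 1 := by
      rw [X_mul_monomial', heq]
    rw [hmono, mul_assoc]
    have hinner : (monomial (m - Finsupp.single r 1) (1 : K) * f)
        ∈ homogeneousSubmodule (Fin (n + 1)) K (e + k) := by
      rw [mem_homogeneousSubmodule]
      have h := (monomial_homog (m - Finsupp.single r 1) (1 : K)).mul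
        ((mem_homogeneousSubmodule _ _).mp hf)
      rw [hdeg, Nat.add_comm k e] at h
      exact h
    rw [show e + (k + 1) = (e + k) + 1 from rfl]
    rw [Phi_X_mul O g hd₀ HC (by omega) hinner r]
    rw [ih (m - Finsupp.single r 1) hdeg e f hf (by omega) h0]
    rw [Matrix.mulVec_zero]

lemma Phi_hc_mul (O : Set (Term n)) {g : Term n → MvPolynomial (Fin (n + 1)) K}
    {d₀ : ℕ} (hd₀ : 2 ≤ d₀)
    (HC : ∀ d ≤ d₀ - 2, ∀ r s : Fin (n + 1),
      multMatrix O g r (d + 1) * multMatrix O g s d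
        = multMatrix O g s (d + 1) * multMatrix O g r d)
    (q x : MvPolynomial (Fin (n + 1)) K)
    (hx : ∀ e ≤ d₀, Phi O g e ((homogeneousComponent e) x) = 0) :
    ∀ D ≤ d₀, Phi O g D ((homogeneousComponent D) (q * x)) = 0 := by
  classical
  intro D hD
  -- expand q and x into homogeneous components
  have hqx : q * x = ∑ j ∈ Finset.range (q.totalDegree + 1),
      ∑ e ∈ Finset.range (x.totalDegree + 1),
        (homogeneousComponent j q) * (homogeneousComponent e x) := by
    conv_lhs => rw [← q.sum_homogeneousComponent, ← x.sum_homogeneousComponent]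
    rw [Finset.sum_mul]
    exact Finset.sum_congr rfl fun j _ => Finset.mul_sum _ _ _
  rw [hqx]
  rw [map_sum (homogeneousComponent D) _ (Finset.range (q.totalDegree + 1))]
  rw [map_sum (Phi O g D) _ (Finset.range (q.totalDegree + 1))]
  refine Finset.sum_eq_zero fun j _ => ?_
  rw [map_sum (homogeneousComponent D) _ (Finset.range (x.totalDegree + 1))]
  rw [map_sum (Phi O g D) _ (Finset.range (x.totalDegree + 1))]
  refine Finset.sum_eq_zero fun e _ => ?_
  have hprod : (homogeneousComponent j q) * (homogeneousComponent e x)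
      ∈ homogeneousSubmodule (Fin (n + 1)) K (j + e) := by
    rw [mem_homogeneousSubmodule]
    exact (homogeneousComponent_isHomogeneous j q).mul
      (homogeneousComponent_isHomogeneous e x)
  rw [homogeneousComponent_of_mem hprod]
  by_cases hje : D = j + e
  · rw [if_pos hje]
    subst hje
    -- expand homogeneousComponent j q into monomials
    conv_lhs => rw [(homogeneousComponent j q).as_sum]
    rw [Finset.sum_mul, map_sum]
    refine Finset.sum_eq_zero fun m hm => ?_
    have hdm : tdeg m = j := tdeg_of_mem_support (homogeneousComponent_isHomogeneous j q) hm
    have hmono : monomial m (coeff m (homogeneousComponent j q))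
        = coeff m (homogeneousComponent j q) • monomial m (1 : K) := by
      rw [smul_monomial, smul_eq_mul, mul_one]
    rw [hmono, smul_mul_assoc, map_smul]
    have hmem : (homogeneousComponent e x) ∈ homogeneousSubmodule (Fin (n + 1)) K e :=
      (mem_homogeneousSubmodule _ _).mpr (homogeneousComponent_isHomogeneous e x)
    have hz : Phi O g (e + j) (monomial m (1 : K) * homogeneousComponent e x) = 0 :=
      Phi_monomial_mul_zero O g hd₀ HC j m hdm e (homogeneousComponent e x) hmem
        (by omega) (hx e (by omega))
    rw [Nat.add_comm j e, hz, smul_zero]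
  · rw [if_neg hje, map_zero]

lemma Phi_ideal (O : Set (Term n)) {g : Term n → MvPolynomial (Fin (n + 1)) K}
    (hO : IsOrderIdeal O) (hg : IsPrebasis O g) {d₀ : ℕ} (hd₀ : 2 ≤ d₀)
    (HC : ∀ d ≤ d₀ - 2, ∀ r s : Fin (n + 1),
      multMatrix O g r (d + 1) * multMatrix O g s d
        = multMatrix O g s (d + 1) * multMatrix O g r d)
    {f : MvPolynomial (Fin (n + 1)) K} (hf : f ∈ idealG O g) :
    ∀ D ≤ d₀, Phi O g D ((homogeneousComponent D) f) = 0 := by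
  classical
  rw [idealG] at hf
  induction hf using Submodule.span_induction with
  | mem x hx =>
    obtain ⟨σ, hσ, rfl⟩ := hx
    intro D hD
    have hgh : g σ ∈ homogeneousSubmodule (Fin (n + 1)) K (tdeg σ) :=
      (mem_homogeneousSubmodule _ _).mpr (g_homog hg hσ)
    rw [homogeneousComponent_of_mem hgh]
    by_cases h : D = tdeg σ
    · rw [if_pos h]
      obtain ⟨hσO, r, τ, hτ, hστ⟩ := hσ
      have hσd : tdeg σ = tdeg τ + 1 := by
        rw [hστ, tdeg_add, tdeg_single]
      have hD' : tdeg τ + 1 ≤ d₀ := by omega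
      rw [h, hσd]
      exact Phi_g O hO hg hd₀ HC ⟨hσO, r, τ, hτ, hστ⟩ hσd hD'
    · rw [if_neg h, map_zero]
  | zero =>
    intro D _
    rw [map_zero, map_zero]
  | add x y hx hy ihx ihy =>
    intro D hD
    rw [map_add, map_add, ihx D hD, ihy D hD, add_zero]
  | smul a x hx ih =>
    intro D hD
    rw [smul_eq_mul]
    exact Phi_hc_mul O hd₀ HC a x (fun e he => ih e he) D hD

lemma disjointness (O : Set (Term n)) {g : Term n → MvPolynomial (Fin (n + 1)) K}
    (hO : IsOrderIdeal O) (hg : IsPrebasis O g) {d₀ : ℕ} (hd₀ : 2 ≤ d₀)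
    (HC : ∀ d ≤ d₀ - 2, ∀ r s : Fin (n + 1),
      multMatrix O g r (d + 1) * multMatrix O g s d
        = multMatrix O g s (d + 1) * multMatrix O g r d)
    (D : ℕ) (hD : D ≤ d₀) :
    Disjoint (degPart (idealG O g) D) (spanTerms K (Od O D)) := by
  rw [Submodule.disjoint_def]
  intro f hf1 hf2
  rw [degPart, Submodule.mem_inf, Submodule.restrictScalars_mem] at hf1
  have hsupp : ∀ m ∈ f.support, m ∈ Od O D := support_subset_of_mem_spanTerms hf2
  have h1 : Phi O g D f = fun τ'' => coeff τ''.1 f := Phi_of_supp O g hO hsupp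
  have h2 : Phi O g D f = 0 := by
    have h := Phi_ideal O hO hg hd₀ HC hf1.1 D hD
    rwa [homogeneousComponent_of_mem hf1.2, if_pos rfl] at h
  rw [MvPolynomial.eq_zero_iff]
  intro m
  by_cases hm : m ∈ f.support
  · have h3 := congrFun (h1.symm.trans h2) ⟨m, hsupp m hm⟩
    simpa using h3
  · exact MvPolynomial.notMem_support_iff.mp hm

/-! ### the congruence `x_r x_s τ ≡ Σ (Χ_r Χ_s)[τ'',τ] τ''` and (i) ⇒ (ii) -/

lemma cong2 (O : Set (Term n)) {g : Term n → MvPolynomial (Fin (n + 1)) K}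
    (hg : IsPrebasis O g) (r s : Fin (n + 1)) (d : ℕ) (τ : OdSub O d) :
    monomial (τ.1 + Finsupp.single s 1 + Finsupp.single r 1) (1 : K)
      - ∑ τ'' : OdSub O (d + 1 + 1),
          (multMatrix O g r (d + 1) * multMatrix O g s d) τ'' τ • monomial τ''.1 (1 : K)
      ∈ idealG O g := by
  classical
  have key :
      monomial (τ.1 + Finsupp.single s 1 + Finsupp.single r 1) (1 : K)
        - ∑ τ'' : OdSub O (d + 1 + 1),
            (multMatrix O g r (d + 1) * multMatrix O g s d) τ'' τ • monomial τ''.1 (1 : K)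
      = (X r : MvPolynomial (Fin (n + 1)) K) * errP O g s d τ
        + ∑ τ' : OdSub O (d + 1), multMatrix O g s d τ' τ • errP O g r (d + 1) τ' := by
    simp only [errP]
    rw [mul_sub, X_mul_monomial', Finset.mul_sum]
    simp only [mul_smul_comm, X_mul_monomial', smul_sub]
    rw [Finset.sum_sub_distrib]
    have hdouble : ∑ τ' : OdSub O (d + 1), multMatrix O g s d τ' τ •
        ∑ τ'' : OdSub O (d + 1 + 1), multMatrix O g r (d + 1) τ'' τ' • monomial τ''.1 (1 : K)
        = ∑ τ'' : OdSub O (d + 1 + 1),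
            (multMatrix O g r (d + 1) * multMatrix O g s d) τ'' τ • monomial τ''.1 (1 : K) := by
      simp only [Finset.smul_sum, smul_smul]
      rw [Finset.sum_comm]
      simp only [Matrix.mul_apply, Finset.sum_smul]
      exact Finset.sum_congr rfl fun τ'' _ => Finset.sum_congr rfl fun τ' _ => by
        rw [mul_comm]
    rw [hdouble]
    abel
  rw [key]
  apply Ideal.add_mem
  · exact Ideal.mul_mem_left _ _ (errP_mem O hg s d τ)
  · apply Submodule.sum_mem
    intro τ' _
    rw [smul_eq_C_mul]
    exact Ideal.mul_mem_left _ _ (errP_mem O hg r (d + 1) τ')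

lemma matrices_comm_of_basis (O : Set (Term n)) {g : Term n → MvPolynomial (Fin (n + 1)) K}
    (hg : IsPrebasis O g) {d₀ : ℕ} (hd₀ : 2 ≤ d₀)
    (H : ∀ d ≤ d₀,
      degPart (idealG O g) d ⊔ spanTerms K (Od O d)
          = homogeneousSubmodule (Fin (n + 1)) K d ∧
        Disjoint (degPart (idealG O g) d) (spanTerms K (Od O d)))
    (d : ℕ) (hd : d ≤ d₀ - 2) (r s : Fin (n + 1)) :
    multMatrix O g r (d + 1) * multMatrix O g s d
      = multMatrix O g s (d + 1) * multMatrix O g r d := by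
  classical
  ext τ'' τ
  have h1 := cong2 O hg r s d τ
  have h2 := cong2 O hg s r d τ
  have hmm : τ.1 + Finsupp.single r 1 + Finsupp.single s 1
      = τ.1 + Finsupp.single s 1 + Finsupp.single r 1 := by
    rw [add_right_comm]
  rw [hmm] at h2
  set c : OdSub O (d + 1 + 1) → K := fun τ''₀ =>
    (multMatrix O g s (d + 1) * multMatrix O g r d) τ''₀ τ
      - (multMatrix O g r (d + 1) * multMatrix O g s d) τ''₀ τ with hc
  have hF : (∑ τ''₀ : OdSub O (d + 1 + 1), c τ''₀ • monomial τ''₀.1 (1 : K))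
      ∈ idealG O g := by
    have h3 := Ideal.sub_mem _ h1 h2
    have h4 : monomial (τ.1 + Finsupp.single s 1 + Finsupp.single r 1) (1 : K)
        - ∑ τ''₀ : OdSub O (d + 1 + 1),
            (multMatrix O g r (d + 1) * multMatrix O g s d) τ''₀ τ • monomial τ''₀.1 (1 : K)
        - (monomial (τ.1 + Finsupp.single s 1 + Finsupp.single r 1) (1 : K)
          - ∑ τ''₀ : OdSub O (d + 1 + 1),
              (multMatrix O g s (d + 1) * multMatrix O g r d) τ''₀ τ • monomial τ''₀.1 (1 : K))
        = ∑ τ''₀ : OdSub O (d + 1 + 1), c τ''₀ • monomial τ''₀.1 (1 : K) := by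
      rw [hc]
      simp only [sub_smul]
      rw [Finset.sum_sub_distrib]
      abel
    rwa [h4] at h3
  have hhom : (∑ τ''₀ : OdSub O (d + 1 + 1), c τ''₀ • monomial τ''₀.1 (1 : K))
      ∈ homogeneousSubmodule (Fin (n + 1)) K (d + 1 + 1) := by
    apply Submodule.sum_mem
    intro τ''₀ _
    apply Submodule.smul_mem
    rw [mem_homogeneousSubmodule]
    exact isHomogeneous_monomial _ (by rw [degree_eq_tdeg, τ''₀.2.2])
  have hspan : (∑ τ''₀ : OdSub O (d + 1 + 1), c τ''₀ • monomial τ''₀.1 (1 : K))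
      ∈ spanTerms K (Od O (d + 1 + 1)) := by
    apply Submodule.sum_mem
    intro τ''₀ _
    exact Submodule.smul_mem _ _ (Submodule.subset_span ⟨τ''₀.1, τ''₀.2, rfl⟩)
  have hdisj := (H (d + 2) (by omega)).2
  have hzero : (∑ τ''₀ : OdSub O (d + 1 + 1), c τ''₀ • monomial τ''₀.1 (1 : K)) = 0 := by
    apply Submodule.disjoint_def.mp hdisj _ _ hspan
    rw [degPart, Submodule.mem_inf, Submodule.restrictScalars_mem]
    exact ⟨hF, hhom⟩
  have h5 := congrArg (coeff τ''.1) hzero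
  rw [coeff_odSum c τ'', coeff_zero] at h5
  rw [hc] at h5
  simp only at h5
  have h6 := sub_eq_zero.mp h5
  exact h6.symm

end Aux

/-- **Commutativity of formal multiplication matrices up to a given degree.** For `d₀ ≥ 2`:
the residue classes of `𝒪_d` form a basis of `P_d/(G)_d` for all `d ≤ d₀` iff the graded
formal multiplication matrices commute, `Χ_r^{(d+1)}Χ_s^{(d)} = Χ_s^{(d+1)}Χ_r^{(d)}`, for
all `d ≤ d₀ - 2`; in that case, for `d ≤ d₀ - 1` the matrices represent multiplication by
`x_r` from `P_d/(G)_d` to `P_{d+1}/(G)_{d+1}` in the bases given by `𝒪_d` and `𝒪_{d+1}`. -/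
theorem comm_matrices_up_to (O : Set (Term n)) (hO : IsOrderIdeal O) (hinf : O.Infinite)
    (g : Term n → MvPolynomial (Fin (n + 1)) K) (hg : IsPrebasis O g)
    (d₀ : ℕ) (hd₀ : 2 ≤ d₀) :
    ((∀ d ≤ d₀,
        degPart (idealG O g) d ⊔ spanTerms K (Od O d) =
          homogeneousSubmodule (Fin (n + 1)) K d ∧
        Disjoint (degPart (idealG O g) d) (spanTerms K (Od O d))) ↔
      (∀ d ≤ d₀ - 2, ∀ r s : Fin (n + 1),
        multMatrix O g r (d + 1) * multMatrix O g s d =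
          multMatrix O g s (d + 1) * multMatrix O g r d)) ∧
    ((∀ d ≤ d₀,
        degPart (idealG O g) d ⊔ spanTerms K (Od O d) =
          homogeneousSubmodule (Fin (n + 1)) K d ∧
        Disjoint (degPart (idealG O g) d) (spanTerms K (Od O d))) →
      ∀ d ≤ d₀ - 1, ∀ r : Fin (n + 1), ∀ τ : OdSub O d,
        monomial (τ.1 + Finsupp.single r 1) (1 : K) -
          ∑ τ' : OdSub O (d + 1), multMatrix O g r d τ' τ • monomial τ'.1 (1 : K) ∈
            idealG O g) := by
  constructor
  · constructor
    · intro H d hd r s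
      exact matrices_comm_of_basis O hg hd₀ H d hd r s
    · intro HC d hd
      exact ⟨spanning O hO hg d, disjointness O hO hg hd₀ HC d hd⟩
  · intro _ d _ r τ
    simpa only [errP] using errP_mem O hg r d τ

end Border
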